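/- Under the stated assumptions, (ΔQ)² ≤ L_Q² · (c + √(c² + ΔL_BC))². (This is the upper-bound half of Proposition 1 of the paper.) -/

import Mathlib

open MeasureTheory Real

lemma holder2 {α : Type*} [MeasurableSpace α] {μ : Measure α} {f g : α → ℝ}
    (hf0 : ∀ s, 0 ≤ f s) (hg0 : ∀ s, 0 ≤ g s)
    (hf : MemLp f 2 μ) (hg : MemLp g 2 μ) :
    ∫ a, f a * g a ∂μ ≤ Real.sqrt (∫ a, f a ^ 2 ∂μ) * Real.sqrt (∫ a, g a ^ 2 ∂μ) := by
  have hpq : (2 : ℝ).HolderConjugate 2 := Real.holderConjugate_iff.2 ⟨by norm_num, by norm_num⟩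
  have h2 : ENNReal.ofReal (2 : ℝ) = 2 := by norm_num
  have hmain := integral_mul_le_Lp_mul_Lq_of_nonneg hpq
    (Filter.Eventually.of_forall hf0) (Filter.Eventually.of_forall hg0)
    (h2 ▸ hf) (h2 ▸ hg)
  have hrw : ∀ (h : α → ℝ), (∫ a, h a ^ (2:ℝ) ∂μ) ^ ((1:ℝ)/2)
      = Real.sqrt (∫ a, h a ^ 2 ∂μ) := by
    intro h
    rw [Real.sqrt_eq_rpow]
    congr 1
    refine integral_congr_ae (Filter.Eventually.of_forall fun a => ?_)
    show h a ^ (2:ℝ) = h a ^ (2:ℕ)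
    rw [← Real.rpow_natCast (h a) 2]
    norm_num
  rw [hrw f, hrw g] at hmain
  exact hmain

/-- Upper-bound half of Proposition 1: `(ΔQ)² ≤ L_Q² · (c + √(c² + ΔL_BC))²`. -/
theorem stmt_1
    {S : Type*} [MeasurableSpace S] (μ : Measure S) [IsProbabilityMeasure μ]
    {H : Type*} [NormedAddCommGroup H] [InnerProductSpace ℝ H]
    [MeasurableSpace H] [BorelSpace H]
    (πp πt πβ : S → H)
    (hπp : Measurable πp) (hπ : Measurable πt) (hπβ : Measurable πβ)
    (hint₁ : Integrable (fun s => ‖πp s - πβ s‖ ^ 2) μ)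
    (hint₂ : Integrable (fun s => ‖πt s - πβ s‖ ^ 2) μ)
    (hint₃ : Integrable (fun s => ‖πp s - πt s‖ ^ 2) μ)
    (L_Q : ℝ) (hL_Q : 0 < L_Q)
    (Q : S → H → ℝ)
    (hLip : ∀ s a₁ a₂, |Q s a₁ - Q s a₂| ≤ L_Q * ‖a₁ - a₂‖)
    (hQ₁ : Integrable (fun s => Q s (πp s)) μ)
    (hQ₂ : Integrable (fun s => Q s (πt s)) μ)
    (LpBC LBC ΔL x c ΔQ : ℝ)
    (hLpBC : LpBC = ∫ s, ‖πp s - πβ s‖ ^ 2 ∂μ)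
    (hLBC : LBC = ∫ s, ‖πt s - πβ s‖ ^ 2 ∂μ)
    (hΔL : ΔL = |LpBC - LBC|)
    (hx : x = ∫ s, ‖πp s - πt s‖ ^ 2 ∂μ)
    (hc : c = Real.sqrt LBC)
    (hΔQ : ΔQ = ∫ s, (Q s (πp s) - Q s (πt s)) ∂μ) :
    ΔQ ^ 2 ≤ L_Q ^ 2 * (c + Real.sqrt (c ^ 2 + ΔL)) ^ 2 := by
  subst hc
  let u : S → ℝ := fun s => ‖πp s - πβ s‖
  let v : S → ℝ := fun s => ‖πt s - πβ s‖
  let w : S → ℝ := fun s => ‖πp s - πt s‖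
  have hi1 : Integrable (fun s => u s ^ 2) μ := hint₁
  have hi2 : Integrable (fun s => v s ^ 2) μ := hint₂
  have hi3 : Integrable (fun s => w s ^ 2) μ := hint₃
  -- a.e. strong measurability of u, v, w via sqrt of the squares
  have haesm : ∀ (f : S → ℝ), (∀ s, 0 ≤ f s) → Integrable (fun s => f s ^ 2) μ →
      AEStronglyMeasurable f μ := by
    intro f hf0 hfi
    have h := Real.continuous_sqrt.comp_aestronglyMeasurable hfi.aestronglyMeasurable
    exact h.congr (Filter.Eventually.of_forall fun s => Real.sqrt_sq (hf0 s))
  have hu0 : ∀ s, 0 ≤ u s := fun s => norm_nonneg _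
  have hv0 : ∀ s, 0 ≤ v s := fun s => norm_nonneg _
  have hw0 : ∀ s, 0 ≤ w s := fun s => norm_nonneg _
  have hum : AEStronglyMeasurable u μ := haesm u hu0 hi1
  have hvm : AEStronglyMeasurable v μ := haesm v hv0 hi2
  have hwm : AEStronglyMeasurable w μ := haesm w hw0 hi3
  have hu2 : MemLp u 2 μ := (memLp_two_iff_integrable_sq hum).2 hi1
  have hv2 : MemLp v 2 μ := (memLp_two_iff_integrable_sq hvm).2 hi2
  have hw2 : MemLp w 2 μ := (memLp_two_iff_integrable_sq hwm).2 hi3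
  have hLpBC' : LpBC = ∫ s, u s ^ 2 ∂μ := hLpBC
  have hLBC' : LBC = ∫ s, v s ^ 2 ∂μ := hLBC
  have hx' : x = ∫ s, w s ^ 2 ∂μ := hx
  have hLpBC0 : 0 ≤ LpBC := hLpBC' ▸ integral_nonneg fun s => sq_nonneg _
  have hLBC0 : 0 ≤ LBC := hLBC' ▸ integral_nonneg fun s => sq_nonneg _
  have hx0 : 0 ≤ x := hx' ▸ integral_nonneg fun s => sq_nonneg _
  -- integrability of u * v
  have huv : Integrable (fun s => u s * v s) μ := by
    refine Integrable.mono' ((hi1.add hi2).div_const 2)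
      (hum.mul hvm) (Filter.Eventually.of_forall fun s => ?_)
    have h1 : u s * v s ≤ (u s ^ 2 + v s ^ 2) / 2 := by nlinarith [sq_nonneg (u s - v s)]
    have h2 : 0 ≤ u s * v s := mul_nonneg (hu0 s) (hv0 s)
    simpa [Real.norm_eq_abs, abs_of_nonneg (hu0 s), abs_of_nonneg (hv0 s), abs_mul] using h1
  -- Cauchy–Schwarz: ∫ u v ≤ √LpBC * √LBC
  have hCS : ∫ s, u s * v s ∂μ ≤ Real.sqrt LpBC * Real.sqrt LBC := by
    have := holder2 hu0 hv0 hu2 hv2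
    rwa [← hLpBC', ← hLBC'] at this
  -- triangle inequality in L²: x ≤ (√LpBC + √LBC)²
  have hxle : x ≤ (Real.sqrt LpBC + Real.sqrt LBC) ^ 2 := by
    have hpt : ∀ s, w s ^ 2 ≤ u s ^ 2 + 2 * (u s * v s) + v s ^ 2 := by
      intro s
      have htri : w s ≤ u s + v s := by
        calc w s = ‖(πp s - πβ s) - (πt s - πβ s)‖ := by
              show ‖πp s - πt s‖ = _
              congr 1
              abel
          _ ≤ u s + v s := norm_sub_le _ _
      nlinarith [hw0 s, hu0 s, hv0 s]
    have h2uv : Integrable (fun s => 2 * (u s * v s)) μ := huv.const_mul 2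
    have hi12 : Integrable (fun s => u s ^ 2 + 2 * (u s * v s)) μ := hi1.add h2uv
    have hint : Integrable (fun s => u s ^ 2 + 2 * (u s * v s) + v s ^ 2) μ :=
      hi12.add hi2
    have hmono : x ≤ ∫ s, (u s ^ 2 + 2 * (u s * v s) + v s ^ 2) ∂μ := by
      rw [hx']
      exact integral_mono hi3 hint hpt
    have heq : ∫ s, (u s ^ 2 + 2 * (u s * v s) + v s ^ 2) ∂μ
        = LpBC + 2 * ∫ s, u s * v s ∂μ + LBC := by
      rw [integral_add hi12 hi2, integral_add hi1 h2uv, integral_const_mul, hLpBC', hLBC']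
    have hsq : Real.sqrt LpBC ^ 2 = LpBC := Real.sq_sqrt hLpBC0
    have hsq' : Real.sqrt LBC ^ 2 = LBC := Real.sq_sqrt hLBC0
    nlinarith [hmono, heq, hCS]
  have hsqrtx : Real.sqrt x ≤ Real.sqrt LpBC + Real.sqrt LBC := by
    have := Real.sqrt_le_sqrt hxle
    rwa [Real.sqrt_sq (by positivity)] at this
  -- √LpBC ≤ √((√LBC)² + ΔL)
  have hstepB : Real.sqrt LpBC ≤ Real.sqrt (Real.sqrt LBC ^ 2 + ΔL) := by
    apply Real.sqrt_le_sqrt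
    have h1 : LpBC - LBC ≤ |LpBC - LBC| := le_abs_self _
    rw [Real.sq_sqrt hLBC0, hΔL]
    linarith
  have hsqrtx' : Real.sqrt x ≤ Real.sqrt LBC + Real.sqrt (Real.sqrt LBC ^ 2 + ΔL) := by
    linarith
  -- |ΔQ| ≤ L_Q * √x
  have hw1 : Integrable w μ := hw2.integrable (by norm_num)
  have hintw : ∫ s, w s ∂μ ≤ Real.sqrt x := by
    have h1 : MemLp (fun _ : S => (1:ℝ)) 2 μ := memLp_const 1
    have := holder2 hw0 (fun _ => zero_le_one) hw2 h1
    simpa [hx', measure_univ] using this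
  have habs : |ΔQ| ≤ L_Q * Real.sqrt x := by
    rw [hΔQ]
    calc |∫ s, (Q s (πp s) - Q s (πt s)) ∂μ|
        ≤ ∫ s, |Q s (πp s) - Q s (πt s)| ∂μ := by
          simpa [Real.norm_eq_abs] using
            norm_integral_le_integral_norm (μ := μ) (fun s => Q s (πp s) - Q s (πt s))
      _ ≤ ∫ s, L_Q * w s ∂μ := by
          refine integral_mono (hQ₁.sub hQ₂).abs (hw1.const_mul L_Q) fun s => ?_
          exact hLip s (πp s) (πt s)
      _ = L_Q * ∫ s, w s ∂μ := integral_const_mul _ _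
      _ ≤ L_Q * Real.sqrt x := mul_le_mul_of_nonneg_left hintw hL_Q.le
  -- conclude
  have hfin : |ΔQ| ≤ L_Q * (Real.sqrt LBC + Real.sqrt (Real.sqrt LBC ^ 2 + ΔL)) :=
    habs.trans (mul_le_mul_of_nonneg_left hsqrtx' hL_Q.le)
  calc ΔQ ^ 2 = |ΔQ| ^ 2 := (sq_abs _).symm
    _ ≤ (L_Q * (Real.sqrt LBC + Real.sqrt (Real.sqrt LBC ^ 2 + ΔL))) ^ 2 :=
        pow_le_pow_left₀ (abs_nonneg _) hfin 2
    _ = L_Q ^ 2 * (Real.sqrt LBC + Real.sqrt (Real.sqrt LBC ^ 2 + ΔL)) ^ 2 := mul_pow _ _ _
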